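/- arXiv:1205.4654 — 3 statements merged into one kernel-verified Lean document; each statement's English description precedes it below -/
import Mathlib

section
/- If W lies in C_j (i.e., W = a + jb with a, b real) and V is any bicomplex number, then |W| equals the modulus of W as an element of C_j, and |WV| = |W|·|V|. -/
noncomputable section

open MeasureTheory

/-- Bicomplex numbers: `u + j v` with `u, v ∈ ℂ` (the copy `C_i`). -/
@[ext]
structure Bicomplex : Type where
  sc : ℂ
  vec : ℂ

namespace Bicomplex

instance : Zero Bicomplex := ⟨⟨0, 0⟩⟩
instance : One Bicomplex := ⟨⟨1, 0⟩⟩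
instance : Add Bicomplex := ⟨fun a b => ⟨a.sc + b.sc, a.vec + b.vec⟩⟩
instance : Neg Bicomplex := ⟨fun a => ⟨-a.sc, -a.vec⟩⟩
instance : Mul Bicomplex :=
  ⟨fun a b => ⟨a.sc * b.sc - a.vec * b.vec, a.sc * b.vec + a.vec * b.sc⟩⟩

@[simp] theorem zero_sc : (0 : Bicomplex).sc = 0 := rfl
@[simp] theorem zero_vec : (0 : Bicomplex).vec = 0 := rfl
@[simp] theorem one_sc : (1 : Bicomplex).sc = 1 := rfl
@[simp] theorem one_vec : (1 : Bicomplex).vec = 0 := rfl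
@[simp] theorem add_sc' (a b : Bicomplex) : (a + b).sc = a.sc + b.sc := rfl
@[simp] theorem add_vec' (a b : Bicomplex) : (a + b).vec = a.vec + b.vec := rfl
@[simp] theorem neg_sc' (a : Bicomplex) : (-a).sc = -a.sc := rfl
@[simp] theorem neg_vec' (a : Bicomplex) : (-a).vec = -a.vec := rfl
@[simp] theorem mul_sc' (a b : Bicomplex) : (a * b).sc = a.sc * b.sc - a.vec * b.vec := rfl
@[simp] theorem mul_vec' (a b : Bicomplex) : (a * b).vec = a.sc * b.vec + a.vec * b.sc := rfl

instance : CommRing Bicomplex where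
  add_assoc a b c := by ext <;> simp <;> ring
  zero_add a := by ext <;> simp
  add_zero a := by ext <;> simp
  add_comm a b := by ext <;> simp <;> ring
  left_distrib a b c := by ext <;> simp <;> ring
  right_distrib a b c := by ext <;> simp <;> ring
  zero_mul a := by ext <;> simp
  mul_zero a := by ext <;> simp
  mul_assoc a b c := by ext <;> simp <;> ring
  one_mul a := by ext <;> simp
  mul_one a := by ext <;> simp
  neg_add_cancel a := by ext <;> simp
  mul_comm a b := by ext <;> simp <;> ring
  nsmul := nsmulRec
  zsmul := zsmulRec

/-- The embedding of `ℂ` (the copy `C_i`) into the bicomplex numbers. -/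
def ofC (u : ℂ) : Bicomplex := ⟨u, 0⟩

/-- The imaginary unit `i`. -/
def iB : Bicomplex := ⟨Complex.I, 0⟩

/-- The imaginary unit `j`. -/
def jB : Bicomplex := ⟨0, 1⟩

/-- Conjugation with respect to `j`: `u + jv ↦ u - jv`. -/
def conj (W : Bicomplex) : Bicomplex := ⟨W.sc, -W.vec⟩

/-- The idempotent `P⁺ = (1 + ij)/2`. -/
def Pplus : Bicomplex := ofC (1 / 2) * (1 + iB * jB)

/-- The idempotent `P⁻ = (1 - ij)/2`. -/
def Pminus : Bicomplex := ofC (1 / 2) * (1 - iB * jB)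

/-- The idempotent component `W⁺ = Sc W - i Vec W`. -/
def plus (W : Bicomplex) : ℂ := W.sc - Complex.I * W.vec

/-- The idempotent component `W⁻ = Sc W + i Vec W`. -/
def minus (W : Bicomplex) : ℂ := W.sc + Complex.I * W.vec

/-- The norm `|W| = (|W⁺| + |W⁻|)/2`. -/
def bnorm (W : Bicomplex) : ℝ := (‖plus W‖ + ‖minus W‖) / 2

/-- The bicomplex exponential `E[W] = P⁺ e^{W⁺} + P⁻ e^{W⁻}`. -/
def bexp (W : Bicomplex) : Bicomplex :=
  Pplus * ofC (Complex.exp (plus W)) + Pminus * ofC (Complex.exp (minus W))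

end Bicomplex

open Bicomplex in
/-- If `W ∈ C_j` (i.e. `W = a + jb` with `a, b` real) then `|W|` equals the modulus
of `W` as an element of `C_j`, and `|WV| = |W|·|V|` for every bicomplex `V`. -/
theorem bicomplex_bnorm_of_Cj (W : Bicomplex) (h1 : W.sc.im = 0) (h2 : W.vec.im = 0) :
    bnorm W = Real.sqrt (W.sc.re ^ 2 + W.vec.re ^ 2) ∧
      ∀ V : Bicomplex, bnorm (W * V) = bnorm W * bnorm V := by
  have hplusmul : ∀ A B : Bicomplex, plus (A * B) = plus A * plus B := by
    intro A B
    simp [plus, mul_sc', mul_vec']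
    ring_nf
    simp [Complex.I_sq]
    ring
  have hminusmul : ∀ A B : Bicomplex, minus (A * B) = minus A * minus B := by
    intro A B
    simp [minus, mul_sc', mul_vec']
    ring_nf
    simp [Complex.I_sq]
    ring
  have habs : ‖plus W‖ = Real.sqrt (W.sc.re ^ 2 + W.vec.re ^ 2) := by
    rw [Complex.norm_def, Complex.normSq_apply]
    simp [plus, h1, h2]
    ring_nf
  have habs' : ‖minus W‖ = Real.sqrt (W.sc.re ^ 2 + W.vec.re ^ 2) := by
    rw [Complex.norm_def, Complex.normSq_apply]
    simp [minus, h1, h2]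
    ring_nf
  have hb : bnorm W = Real.sqrt (W.sc.re ^ 2 + W.vec.re ^ 2) := by
    rw [bnorm, habs, habs']; ring
  refine ⟨hb, fun V => ?_⟩
  rw [bnorm, hplusmul, hminusmul, norm_mul, norm_mul, habs, habs', hb, bnorm]
  ring
end
end

section
/- Let a, b be C_j-valued functions. A C¹ bicomplex function W satisfies ∂_z̄W = aW + bW̄ if and only if the two C_j-valued functions H₁ := Re(Sc W) + j Re(Vec W) and H₂ := Im(Sc W) + j Im(Vec W) each satisfy the same (complex) Vekua equation ∂_z̄H = aH + bH̄. -/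
noncomputable section

open MeasureTheory

namespace Bicomplex

/-- Partial derivative `∂_x` of a `ℂ`-valued function on `ℝ²`. -/
def px (f : ℝ × ℝ → ℂ) (p : ℝ × ℝ) : ℂ := fderiv ℝ f p (1, 0)

/-- Partial derivative `∂_y` of a `ℂ`-valued function on `ℝ²`. -/
def py (f : ℝ × ℝ → ℂ) (p : ℝ × ℝ) : ℂ := fderiv ℝ f p (0, 1)

/-- The bicomplex Cauchy–Riemann operator `∂_z̄ = (∂_x + j ∂_y)/2`
applied to a bicomplex-valued function `W = u + j v`:
`∂_z̄ W = (u_x - v_y)/2 + j (v_x + u_y)/2`. -/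
def dbar (W : ℝ × ℝ → Bicomplex) (p : ℝ × ℝ) : Bicomplex :=
  ⟨(px (fun q => (W q).sc) p - py (fun q => (W q).vec) p) / 2,
   (px (fun q => (W q).vec) p + py (fun q => (W q).sc) p) / 2⟩

/-- The bicomplex operator `∂_z = (∂_x - j ∂_y)/2`. -/
def dz (W : ℝ × ℝ → Bicomplex) (p : ℝ × ℝ) : Bicomplex :=
  ⟨(px (fun q => (W q).sc) p + py (fun q => (W q).vec) p) / 2,
   (px (fun q => (W q).vec) p - py (fun q => (W q).sc) p) / 2⟩

/-- The complex Cauchy–Riemann operator `d_z = (∂_x - i ∂_y)/2`. -/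
def dzC (f : ℝ × ℝ → ℂ) (p : ℝ × ℝ) : ℂ := (px f p - Complex.I * py f p) / 2

/-- The complex Cauchy–Riemann operator `d_z̄ = (∂_x + i ∂_y)/2`. -/
def dzbarC (f : ℝ × ℝ → ℂ) (p : ℝ × ℝ) : ℂ := (px f p + Complex.I * py f p) / 2

/-- The Laplacian `Δ = ∂_x² + ∂_y²`. -/
def lap (f : ℝ × ℝ → ℂ) (p : ℝ × ℝ) : ℂ :=
  px (fun q => px f q) p + py (fun q => py f q) p

/-- Real differentiability of a bicomplex-valued function at a point (componentwise). -/
def DiffAt (W : ℝ × ℝ → Bicomplex) (p : ℝ × ℝ) : Prop :=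
  DifferentiableAt ℝ (fun q => (W q).sc) p ∧ DifferentiableAt ℝ (fun q => (W q).vec) p

end Bicomplex

namespace Bicomplex

lemma pd_clm (L : ℂ →L[ℝ] ℂ) (f : ℝ × ℝ → ℂ) (p : ℝ × ℝ)
    (hf : DifferentiableAt ℝ f p) (v : ℝ × ℝ) :
    fderiv ℝ (fun q => L (f q)) p v = L (fderiv ℝ f p v) := by
  have h := (L.hasFDerivAt.comp p hf.hasFDerivAt).fderiv
  rw [Function.comp_def] at h
  rw [h]; rfl

lemma px_re (f : ℝ × ℝ → ℂ) (p : ℝ × ℝ) (hf : DifferentiableAt ℝ f p) :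
    px (fun q => ((f q).re : ℂ)) p = ((px f p).re : ℂ) :=
  pd_clm (Complex.ofRealCLM.comp Complex.reCLM) f p hf (1, 0)

lemma py_re (f : ℝ × ℝ → ℂ) (p : ℝ × ℝ) (hf : DifferentiableAt ℝ f p) :
    py (fun q => ((f q).re : ℂ)) p = ((py f p).re : ℂ) :=
  pd_clm (Complex.ofRealCLM.comp Complex.reCLM) f p hf (0, 1)

lemma px_im (f : ℝ × ℝ → ℂ) (p : ℝ × ℝ) (hf : DifferentiableAt ℝ f p) :
    px (fun q => ((f q).im : ℂ)) p = ((px f p).im : ℂ) :=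
  pd_clm (Complex.ofRealCLM.comp Complex.imCLM) f p hf (1, 0)

lemma py_im (f : ℝ × ℝ → ℂ) (p : ℝ × ℝ) (hf : DifferentiableAt ℝ f p) :
    py (fun q => ((f q).im : ℂ)) p = ((py f p).im : ℂ) :=
  pd_clm (Complex.ofRealCLM.comp Complex.imCLM) f p hf (0, 1)

end Bicomplex

open Bicomplex in
/-- For `C_j`-valued coefficients `a`, `b`, a `C¹` bicomplex function `W` satisfies
`∂_z̄W = aW + bW̄` iff both `H₁ = Re(Sc W) + j Re(Vec W)` and `H₂ = Im(Sc W) + j Im(Vec W)`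
satisfy the same (complex) Vekua equation. -/
theorem bicomplex_vekua_decouple (Ω : Set (ℝ × ℝ)) (hΩ : IsOpen Ω)
    (a b : ℝ × ℝ → Bicomplex)
    (ha : ∀ p ∈ Ω, (a p).sc.im = 0 ∧ (a p).vec.im = 0)
    (hb : ∀ p ∈ Ω, (b p).sc.im = 0 ∧ (b p).vec.im = 0)
    (W : ℝ × ℝ → Bicomplex) (hW : ∀ p ∈ Ω, DiffAt W p) :
    (∀ p ∈ Ω, dbar W p = a p * W p + b p * conj (W p)) ↔
      ((∀ p ∈ Ω,
          dbar (fun q => (⟨((W q).sc.re : ℂ), ((W q).vec.re : ℂ)⟩ : Bicomplex)) p =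
            a p * ⟨((W p).sc.re : ℂ), ((W p).vec.re : ℂ)⟩ +
              b p * conj ⟨((W p).sc.re : ℂ), ((W p).vec.re : ℂ)⟩) ∧
        ∀ p ∈ Ω,
          dbar (fun q => (⟨((W q).sc.im : ℂ), ((W q).vec.im : ℂ)⟩ : Bicomplex)) p =
            a p * ⟨((W p).sc.im : ℂ), ((W p).vec.im : ℂ)⟩ +
              b p * conj ⟨((W p).sc.im : ℂ), ((W p).vec.im : ℂ)⟩) := by
  have key : ∀ p ∈ Ω,
      (dbar W p = a p * W p + b p * conj (W p)) ↔
      ((dbar (fun q => (⟨((W q).sc.re : ℂ), ((W q).vec.re : ℂ)⟩ : Bicomplex)) p =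
            a p * ⟨((W p).sc.re : ℂ), ((W p).vec.re : ℂ)⟩ +
              b p * conj ⟨((W p).sc.re : ℂ), ((W p).vec.re : ℂ)⟩) ∧
        (dbar (fun q => (⟨((W q).sc.im : ℂ), ((W q).vec.im : ℂ)⟩ : Bicomplex)) p =
            a p * ⟨((W p).sc.im : ℂ), ((W p).vec.im : ℂ)⟩ +
              b p * conj ⟨((W p).sc.im : ℂ), ((W p).vec.im : ℂ)⟩)) := by
    intro p hp
    obtain ⟨hd1, hd2⟩ := hW p hp
    obtain ⟨ha1, ha2⟩ := ha p hp
    obtain ⟨hb1, hb2⟩ := hb p hp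
    have e1 : px (fun q => (((W q).sc.re : ℂ))) p
        = ((px (fun q => (W q).sc) p).re : ℂ) := px_re _ p hd1
    have e2 : py (fun q => (((W q).sc.re : ℂ))) p
        = ((py (fun q => (W q).sc) p).re : ℂ) := py_re _ p hd1
    have e3 : px (fun q => (((W q).vec.re : ℂ))) p
        = ((px (fun q => (W q).vec) p).re : ℂ) := px_re _ p hd2
    have e4 : py (fun q => (((W q).vec.re : ℂ))) p
        = ((py (fun q => (W q).vec) p).re : ℂ) := py_re _ p hd2
    have f1 : px (fun q => (((W q).sc.im : ℂ))) p
        = ((px (fun q => (W q).sc) p).im : ℂ) := px_im _ p hd1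
    have f2 : py (fun q => (((W q).sc.im : ℂ))) p
        = ((py (fun q => (W q).sc) p).im : ℂ) := py_im _ p hd1
    have f3 : px (fun q => (((W q).vec.im : ℂ))) p
        = ((px (fun q => (W q).vec) p).im : ℂ) := px_im _ p hd2
    have f4 : py (fun q => (((W q).vec.im : ℂ))) p
        = ((py (fun q => (W q).vec) p).im : ℂ) := py_im _ p hd2
    simp only [dbar, conj, Bicomplex.ext_iff, mul_sc', mul_vec', add_sc', add_vec',
      e1, e2, e3, e4, f1, f2, f3, f4, Complex.ext_iff,
      Complex.add_re, Complex.add_im, Complex.sub_re, Complex.sub_im,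
      Complex.mul_re, Complex.mul_im, Complex.div_re, Complex.div_im,
      Complex.ofReal_re, Complex.ofReal_im, Complex.neg_re, Complex.neg_im,
      ha1, ha2, hb1, hb2]
    norm_num
    tauto
  constructor
  · intro h
    exact ⟨fun p hp => ((key p hp).mp (h p hp)).1, fun p hp => ((key p hp).mp (h p hp)).2⟩
  · rintro ⟨h1, h2⟩ p hp
    exact (key p hp).mpr ⟨h1 p hp, h2 p hp⟩
end
end

section
/- Let f ∈ C²(Ω) be a nonvanishing C_i-valued solution of the Schrödinger equation Δf = qf on a domain Ω, and let W = u + jv (u = Sc W, v = Vec W, both C_i-valued) be a C² solution of the main bicomplex Vekua equation ∂_z̄W = (∂_z̄f / f)·W̄ on Ω. Then u solves Δu - qu = 0 and v solves Δv - q₁v = 0, where q₁ = 2((∂_x f)² + (∂_y f)²)/f² - q. -/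
noncomputable section

open MeasureTheory

namespace Bicomplex

variable {Ω : Set (ℝ × ℝ)} {p : ℝ × ℝ} {a b g : ℝ × ℝ → ℂ}

theorem px_mul (ha : DifferentiableAt ℝ a p) (hb : DifferentiableAt ℝ b p) :
    px (fun r => a r * b r) p = px a p * b p + a p * px b p := by
  simp only [px, fderiv_fun_mul ha hb]
  simp; ring

theorem py_mul (ha : DifferentiableAt ℝ a p) (hb : DifferentiableAt ℝ b p) :
    py (fun r => a r * b r) p = py a p * b p + a p * py b p := by
  simp only [py, fderiv_fun_mul ha hb]
  simp; ring

theorem px_add (ha : DifferentiableAt ℝ a p) (hb : DifferentiableAt ℝ b p) :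
    px (fun r => a r + b r) p = px a p + px b p := by
  simp [px, fderiv_fun_add ha hb]

theorem py_add (ha : DifferentiableAt ℝ a p) (hb : DifferentiableAt ℝ b p) :
    py (fun r => a r + b r) p = py a p + py b p := by
  simp [py, fderiv_fun_add ha hb]

theorem px_sub (ha : DifferentiableAt ℝ a p) (hb : DifferentiableAt ℝ b p) :
    px (fun r => a r - b r) p = px a p - px b p := by
  simp [px, fderiv_fun_sub ha hb]

theorem py_sub (ha : DifferentiableAt ℝ a p) (hb : DifferentiableAt ℝ b p) :
    py (fun r => a r - b r) p = py a p - py b p := by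
  simp [py, fderiv_fun_sub ha hb]

theorem px_congr (hΩ : IsOpen Ω) (hp : p ∈ Ω) (h : ∀ r ∈ Ω, a r = b r) :
    px a p = px b p := by
  unfold px
  rw [Filter.EventuallyEq.fderiv_eq (Filter.eventuallyEq_of_mem (hΩ.mem_nhds hp) h)]

theorem py_congr (hΩ : IsOpen Ω) (hp : p ∈ Ω) (h : ∀ r ∈ Ω, a r = b r) :
    py a p = py b p := by
  unfold py
  rw [Filter.EventuallyEq.fderiv_eq (Filter.eventuallyEq_of_mem (hΩ.mem_nhds hp) h)]

theorem diffAt_of_c2 (hΩ : IsOpen Ω) (hp : p ∈ Ω) (h : ContDiffOn ℝ 2 g Ω) :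
    DifferentiableAt ℝ g p :=
  (h.differentiableOn (by norm_num)).differentiableAt (hΩ.mem_nhds hp)

theorem fderiv_diffAt (hΩ : IsOpen Ω) (hp : p ∈ Ω) (h : ContDiffOn ℝ 2 g Ω) :
    DifferentiableAt ℝ (fun r => fderiv ℝ g r) p := by
  have h1 : ContDiffOn ℝ 1 (fun r => fderiv ℝ g r) Ω :=
    h.fderiv_of_isOpen hΩ (by norm_num)
  exact (h1.differentiableOn (by norm_num)).differentiableAt (hΩ.mem_nhds hp)

theorem diffAt_apply (hd : DifferentiableAt ℝ (fun r => fderiv ℝ g r) p) (w : ℝ × ℝ) :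
    DifferentiableAt ℝ (fun r => fderiv ℝ g r w) p :=
  (ContinuousLinearMap.apply ℝ ℂ w).differentiable.differentiableAt.comp p hd

theorem px_diffAt (hΩ : IsOpen Ω) (hp : p ∈ Ω) (h : ContDiffOn ℝ 2 g Ω) :
    DifferentiableAt ℝ (px g) p :=
  diffAt_apply (fderiv_diffAt hΩ hp h) _

theorem py_diffAt (hΩ : IsOpen Ω) (hp : p ∈ Ω) (h : ContDiffOn ℝ 2 g Ω) :
    DifferentiableAt ℝ (py g) p :=
  diffAt_apply (fderiv_diffAt hΩ hp h) _

theorem fderiv_apply_const (hd : DifferentiableAt ℝ (fun r => fderiv ℝ g r) p) (v w : ℝ × ℝ) :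
    fderiv ℝ (fun r => fderiv ℝ g r w) p v = fderiv ℝ (fderiv ℝ g) p v w := by
  rw [fderiv_clm_apply hd (differentiableAt_const w)]
  simp

theorem symm_snd (hΩ : IsOpen Ω) (hp : p ∈ Ω) (h : ContDiffOn ℝ 2 g Ω) :
    px (py g) p = py (px g) p := by
  have hca : ContDiffAt ℝ 2 g p := (h p hp).contDiffAt (hΩ.mem_nhds hp)
  have hs := hca.isSymmSndFDerivAt (by simp)
  have hd := fderiv_diffAt hΩ hp h
  show px (fun r => fderiv ℝ g r (0,1)) p = py (fun r => fderiv ℝ g r (1,0)) p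
  unfold px py
  rw [fderiv_apply_const hd, fderiv_apply_const hd]
  exact hs _ _

end Bicomplex


open Bicomplex in
/-- If `f` is a nonvanishing `C²` solution of `Δf = qf` on `Ω` and `W = u + jv` is a `C²`
solution of the main bicomplex Vekua equation `∂_z̄W = (∂_z̄f/f)·W̄`, then `Δu = qu`
and `Δv = q₁v` with `q₁ = 2((f_x)² + (f_y)²)/f² - q`. -/
theorem main_vekua_and_schroedinger (Ω : Set (ℝ × ℝ)) (hΩ : IsOpen Ω)
    (q : ℝ × ℝ → ℂ) (hq : ContinuousOn q Ω)
    (f : ℝ × ℝ → ℂ) (hf : ContDiffOn ℝ 2 f Ω) (hf0 : ∀ p ∈ Ω, f p ≠ 0)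
    (hfq : ∀ p ∈ Ω, lap f p = q p * f p)
    (u v : ℝ × ℝ → ℂ) (hu : ContDiffOn ℝ 2 u Ω) (hv : ContDiffOn ℝ 2 v Ω)
    (hW : ∀ p ∈ Ω,
      dbar (fun r => (⟨u r, v r⟩ : Bicomplex)) p =
        (⟨px f p / (2 * f p), py f p / (2 * f p)⟩ : Bicomplex) * conj ⟨u p, v p⟩) :
    ∀ p ∈ Ω,
      lap u p = q p * u p ∧
        lap v p = (2 * ((px f p) ^ 2 + (py f p) ^ 2) / (f p) ^ 2 - q p) * v p := by

  intro p hp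
  have hF : f p ≠ 0 := hf0 p hp
  have hfd : DifferentiableAt ℝ f p := diffAt_of_c2 hΩ hp hf
  have hud : DifferentiableAt ℝ u p := diffAt_of_c2 hΩ hp hu
  have hvd : DifferentiableAt ℝ v p := diffAt_of_c2 hΩ hp hv
  have hfx := px_diffAt hΩ hp hf
  have hfy := py_diffAt hΩ hp hf
  have hux := px_diffAt hΩ hp hu
  have huy := py_diffAt hΩ hp hu
  have hvx := px_diffAt hΩ hp hv
  have hvy := py_diffAt hΩ hp hv
  have hfs := symm_snd hΩ hp hf
  have hus := symm_snd hΩ hp hu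
  have hvs := symm_snd hΩ hp hv
  have E1 : ∀ r ∈ Ω, f r * px u r - f r * py v r = px f r * u r + py f r * v r := by
    intro r hr
    have h := congrArg Bicomplex.sc (hW r hr)
    simp only [dbar, conj, mul_sc'] at h
    field_simp [hf0 r hr] at h
    linear_combination h
  have E2 : ∀ r ∈ Ω, f r * px v r + f r * py u r = py f r * u r - px f r * v r := by
    intro r hr
    have h := congrArg Bicomplex.vec (hW r hr)
    simp only [dbar, conj, mul_vec'] at h
    field_simp [hf0 r hr] at h
    have h4 : (4 * f r) * (f r * px v r + f r * py u r) =
        (4 * f r) * (py f r * u r - px f r * v r) := by linear_combination 4 * f r * h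
    exact mul_left_cancel₀ (mul_ne_zero (by norm_num) (hf0 r hr)) h4
  have D1x := px_congr hΩ hp E1
  rw [px_sub (hfd.fun_mul hux) (hfd.fun_mul hvy), px_mul hfd hux, px_mul hfd hvy,
    px_add (hfx.fun_mul hud) (hfy.fun_mul hvd), px_mul hfx hud, px_mul hfy hvd] at D1x
  have D1y := py_congr hΩ hp E1
  rw [py_sub (hfd.fun_mul hux) (hfd.fun_mul hvy), py_mul hfd hux, py_mul hfd hvy,
    py_add (hfx.fun_mul hud) (hfy.fun_mul hvd), py_mul hfx hud, py_mul hfy hvd] at D1y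
  have D2x := px_congr hΩ hp E2
  rw [px_add (hfd.fun_mul hvx) (hfd.fun_mul huy), px_mul hfd hvx, px_mul hfd huy,
    px_sub (hfy.fun_mul hud) (hfx.fun_mul hvd), px_mul hfy hud, px_mul hfx hvd] at D2x
  have D2y := py_congr hΩ hp E2
  rw [py_add (hfd.fun_mul hvx) (hfd.fun_mul huy), py_mul hfd hvx, py_mul hfd huy,
    py_sub (hfy.fun_mul hud) (hfx.fun_mul hvd), py_mul hfy hud, py_mul hfx hvd] at D2y
  have hfq' := hfq p hp
  simp only [lap] at hfq'
  refine ⟨?_, ?_⟩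
  · have key : f p * lap u p = f p * (q p * u p) := by
      simp only [lap]
      linear_combination D1x + D2y + f p * hvs + u p * hfq' + v p * hfs
    exact mul_left_cancel₀ hF key
  · have key2 : f p ^ 2 * lap v p =
        (2 * ((px f p) ^ 2 + (py f p) ^ 2) - q p * f p ^ 2) * v p := by
      simp only [lap]
      linear_combination f p * D2x - f p * D1y - f p ^ 2 * hus + f p * u p * hfs
        - f p * v p * hfq' + 2 * py f p * (E1 p hp) - 2 * px f p * (E2 p hp)
    field_simp
    linear_combination key2
end
end
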